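/- Let k be a field, let φ(t), ψ(t) ∈ k[[t]] be power series of positive order with t, φ(t), ψ(t) algebraically independent over k, and let r ≥ 2 be an integer. Then the element f = (y − φ(x))^r + (z − ψ(x))^{r+1} is irreducible in the formal power series ring k[[x,y,z]]. -/

import Mathlib

/-!
STATEMENT 14: if `t, φ(t), ψ(t)` are algebraically independent over `k` with
`φ, ψ` of positive order, then `f = (y − φ(x))^r + (z − ψ(x))^{r+1}` is irreducible
in `k[[x,y,z]] = MvPowerSeries (Fin 3) k` (variables `x = X 0`, `y = X 1`, `z = X 2`;
`φ(x)` is the substitution `t ↦ X 0` in `φ`, defined coefficient-wise).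
-/

noncomputable section

variable {k : Type*} [Field k]

open Classical in
/-- The image of the one-variable power series `φ` under the continuous substitution
`t ↦ X i` into the power series ring in three variables: the coefficient of a
monomial supported on `{i}` with exponent `n` is the `n`-th coefficient of `φ`. -/
def oneVar (i : Fin 3) (φ : PowerSeries k) : MvPowerSeries (Fin 3) k :=
  fun e => if e = Finsupp.single i (e i) then PowerSeries.coeff (e i) φ else 0

namespace Stmt14
set_option maxHeartbeats 1000000

open MvPowerSeries Finsupp

/-- embedding of exponents: Fin 2 → last two slots of Fin 3 -/
def ι (e : Fin 2 →₀ ℕ) : Fin 3 →₀ ℕ :=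
  Finsupp.single 1 (e 0) + Finsupp.single 2 (e 1)

def π (u : Fin 3 →₀ ℕ) : Fin 2 →₀ ℕ :=
  Finsupp.single 0 (u 1) + Finsupp.single 1 (u 2)

lemma ι_apply0 (e : Fin 2 →₀ ℕ) : ι e 0 = 0 := by
  simp [ι, Finsupp.single_apply]

lemma ι_apply1 (e : Fin 2 →₀ ℕ) : ι e 1 = e 0 := by
  simp [ι, Finsupp.single_apply]

lemma ι_apply2 (e : Fin 2 →₀ ℕ) : ι e 2 = e 1 := by
  simp [ι, Finsupp.single_apply]

lemma π_apply0 (u : Fin 3 →₀ ℕ) : π u 0 = u 1 := by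
  simp [π, Finsupp.single_apply]

lemma π_apply1 (u : Fin 3 →₀ ℕ) : π u 1 = u 2 := by
  simp [π, Finsupp.single_apply]

lemma π_ι (e : Fin 2 →₀ ℕ) : π (ι e) = e := by
  ext i
  fin_cases i
  · show π (ι e) 0 = e 0
    rw [π_apply0, ι_apply1]
  · show π (ι e) 1 = e 1
    rw [π_apply1, ι_apply2]

lemma ι_π (u : Fin 3 →₀ ℕ) (h : u 0 = 0) : ι (π u) = u := by
  ext i
  fin_cases i
  · show ι (π u) 0 = u 0
    rw [ι_apply0, h]
  · show ι (π u) 1 = u 1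
    rw [ι_apply1, π_apply0]
  · show ι (π u) 2 = u 2
    rw [ι_apply2, π_apply1]

lemma ι_inj : Function.Injective ι := by
  intro a b h
  rw [← π_ι a, ← π_ι b, h]

lemma π_add (u v : Fin 3 →₀ ℕ) : π (u + v) = π u + π v := by
  ext i
  fin_cases i
  · show π (u+v) 0 = (π u + π v) 0
    simp [π_apply0]
  · show π (u+v) 1 = (π u + π v) 1
    simp [π_apply1]

lemma ι_zero : ι 0 = 0 := by
  simp [ι]


def Θf (a : MvPowerSeries (Fin 3) k) : MvPowerSeries (Fin 2) k := fun e => a (ι e)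

lemma coeff_Θf (a : MvPowerSeries (Fin 3) k) (e : Fin 2 →₀ ℕ) :
    MvPowerSeries.coeff e (Θf a) = MvPowerSeries.coeff (ι e) a := rfl

lemma Θf_one : Θf (1 : MvPowerSeries (Fin 3) k) = 1 := by
  ext e
  rw [coeff_Θf, MvPowerSeries.coeff_one, MvPowerSeries.coeff_one]
  by_cases h : e = 0
  · simp [h, ι_zero]
  · rw [if_neg (fun hc => h (by rw [← π_ι e, hc]; simp [π])), if_neg h]

lemma Θf_mul (a b : MvPowerSeries (Fin 3) k) : Θf (a * b) = Θf a * Θf b := by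
  ext e
  rw [coeff_Θf, MvPowerSeries.coeff_mul, MvPowerSeries.coeff_mul]
  refine Finset.sum_nbij' (fun p => (π p.1, π p.2)) (fun q => (ι q.1, ι q.2)) ?_ ?_ ?_ ?_ ?_
  · intro p hp
    rw [Finset.HasAntidiagonal.mem_antidiagonal] at hp ⊢
    rw [← π_add, hp, π_ι]
  · intro q hq
    rw [Finset.HasAntidiagonal.mem_antidiagonal] at hq ⊢
    have : ι (q.1 + q.2) = ι q.1 + ι q.2 := by
      simp [ι, Finsupp.single_add]; abel
    rw [← this, hq]
  · intro p hp
    rw [Finset.HasAntidiagonal.mem_antidiagonal] at hp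
    have h0 := congrArg (fun f => f 0) hp
    simp only [Finsupp.add_apply] at h0
    rw [ι_apply0] at h0
    have h1 : p.1 0 = 0 := by omega
    have h2 : p.2 0 = 0 := by omega
    simp [ι_π _ h1, ι_π _ h2]
  · intro q hq
    simp [π_ι]
  · intro p hp
    rw [Finset.HasAntidiagonal.mem_antidiagonal] at hp
    have h0 := congrArg (fun f => f 0) hp
    simp only [Finsupp.add_apply] at h0
    rw [ι_apply0] at h0
    have h1 : p.1 0 = 0 := by omega
    have h2 : p.2 0 = 0 := by omega
    show (MvPowerSeries.coeff p.1) a * (MvPowerSeries.coeff p.2) b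
      = MvPowerSeries.coeff (π p.1) (Θf a) * MvPowerSeries.coeff (π p.2) (Θf b)
    rw [coeff_Θf, coeff_Θf, ι_π _ h1, ι_π _ h2]

/-- the "set X 0 to 0" projection, coefficientwise -/
def Θ : MvPowerSeries (Fin 3) k →+* MvPowerSeries (Fin 2) k where
  toFun := Θf
  map_one' := Θf_one
  map_mul' := Θf_mul
  map_zero' := rfl
  map_add' a b := rfl

lemma coeff_Θ (a : MvPowerSeries (Fin 3) k) (e : Fin 2 →₀ ℕ) :
    MvPowerSeries.coeff e (Θ a) = MvPowerSeries.coeff (ι e) a := rfl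

lemma Θ_X1 : Θ (MvPowerSeries.X 1 : MvPowerSeries (Fin 3) k) = MvPowerSeries.X 0 := by
  ext e
  rw [coeff_Θ, MvPowerSeries.coeff_X, MvPowerSeries.coeff_X]
  have : ι (Finsupp.single 0 1) = Finsupp.single 1 1 := by simp [ι]
  by_cases h : e = Finsupp.single 0 1
  · rw [if_pos h, if_pos (by rw [h, this])]
  · rw [if_neg h, if_neg (fun hc => h (ι_inj (by rw [hc, this])))]

lemma Θ_X2 : Θ (MvPowerSeries.X 2 : MvPowerSeries (Fin 3) k) = MvPowerSeries.X 1 := by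
  ext e
  rw [coeff_Θ, MvPowerSeries.coeff_X, MvPowerSeries.coeff_X]
  have : ι (Finsupp.single 1 1) = Finsupp.single 2 1 := by simp [ι]
  by_cases h : e = Finsupp.single 1 1
  · rw [if_pos h, if_pos (by rw [h, this])]
  · rw [if_neg h, if_neg (fun hc => h (ι_inj (by rw [hc, this])))]

lemma Θ_oneVar (φ : PowerSeries k) (hφ : PowerSeries.constantCoeff φ = 0) :
    Θ (oneVar 0 φ) = 0 := by
  ext e
  rw [coeff_Θ, map_zero]
  show oneVar 0 φ (ι e) = 0
  unfold oneVar
  rw [ι_apply0, Finsupp.single_zero]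
  by_cases h : ι e = 0
  · rw [if_pos h]
    simpa using hφ
  · rw [if_neg h]

lemma Θ_constantCoeff (a : MvPowerSeries (Fin 3) k) :
    MvPowerSeries.constantCoeff (Θ a) = MvPowerSeries.constantCoeff a := by
  rw [← MvPowerSeries.coeff_zero_eq_constantCoeff_apply, ← MvPowerSeries.coeff_zero_eq_constantCoeff_apply,
    coeff_Θ, ι_zero]


def wt (r : ℕ) (e : Fin 2 →₀ ℕ) : ℕ := (r+1) * e 0 + r * e 1

lemma wt_apply (r : ℕ) (e : Fin 2 →₀ ℕ) : wt r e = (r+1) * e 0 + r * e 1 := rfl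

lemma wt_add (r : ℕ) (u v : Fin 2 →₀ ℕ) : wt r (u + v) = wt r u + wt r v := by
  simp only [wt_apply, Finsupp.add_apply]; ring

lemma wt_zero (r : ℕ) (hr : 1 ≤ r) (e : Fin 2 →₀ ℕ) (h : wt r e = 0) : e = 0 := by
  rw [wt_apply] at h
  have h1 : e 0 = 0 := by
    rcases Nat.mul_eq_zero.mp (show (r+1) * e 0 = 0 by omega) with h' | h'
    · omega
    · exact h'
  have h2 : e 1 = 0 := by
    rcases Nat.mul_eq_zero.mp (show r * e 1 = 0 by omega) with h' | h'
    · omega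
    · exact h'
  ext i
  fin_cases i
  · show e 0 = 0; exact h1
  · show e 1 = 0; exact h2

lemma exists_min (r : ℕ) (a : MvPowerSeries (Fin 2) k) (h : a ≠ 0) :
    ∃ α, MvPowerSeries.coeff α a ≠ 0 ∧
      (∀ e, MvPowerSeries.coeff e a ≠ 0 → wt r α ≤ wt r e) ∧
      (∀ e, MvPowerSeries.coeff e a ≠ 0 → wt r e = wt r α → α 1 ≤ e 1) := by
  have hne : ∃ e, MvPowerSeries.coeff e a ≠ 0 := by
    by_contra hc
    push_neg at hc
    exact h (MvPowerSeries.ext fun e => by rw [hc e, map_zero])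
  obtain ⟨e0, he0⟩ := hne
  set S : Set ℕ := {n | ∃ e, MvPowerSeries.coeff e a ≠ 0 ∧ wt r e = n} with hS
  have hSne : S.Nonempty := ⟨wt r e0, e0, he0, rfl⟩
  obtain ⟨e1, he1, he1w⟩ := Nat.sInf_mem hSne
  set T : Set ℕ := {m | ∃ e, MvPowerSeries.coeff e a ≠ 0 ∧ wt r e = sInf S ∧ e 1 = m} with hT
  have hTne : T.Nonempty := ⟨e1 1, e1, he1, he1w, rfl⟩
  obtain ⟨α, hα, hαw, hα1⟩ := Nat.sInf_mem hTne
  refine ⟨α, hα, ?_, ?_⟩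
  · intro e he
    rw [hαw]
    exact Nat.sInf_le ⟨e, he, rfl⟩
  · intro e he hew
    rw [hα1]
    exact Nat.sInf_le ⟨e, he, by rw [hew, hαw], rfl⟩

lemma key (r : ℕ) (hr : 1 ≤ r) (a b : MvPowerSeries (Fin 2) k)
    (ha : MvPowerSeries.coeff 0 a = 0) (hb : MvPowerSeries.coeff 0 b = 0) :
    a * b ≠ MvPowerSeries.X 0 ^ r + MvPowerSeries.X 1 ^ (r+1) := by
  intro h
  have hsne : (Finsupp.single 0 r : Fin 2 →₀ ℕ) ≠ Finsupp.single 1 (r+1) := by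
    intro hc
    have := congrArg (fun f => f 0) hc
    simp [Finsupp.single_apply] at this
    omega
  have hg : ∀ e : Fin 2 →₀ ℕ,
      MvPowerSeries.coeff e (MvPowerSeries.X 0 ^ r + MvPowerSeries.X 1 ^ (r+1) : MvPowerSeries (Fin 2) k)
        = (if e = Finsupp.single 0 r then (1:k) else 0)
          + (if e = Finsupp.single 1 (r+1) then (1:k) else 0) := by
    intro e
    rw [map_add, MvPowerSeries.coeff_X_pow, MvPowerSeries.coeff_X_pow]
  have hgne : ∀ e : Fin 2 →₀ ℕ,
      MvPowerSeries.coeff e (MvPowerSeries.X 0 ^ r + MvPowerSeries.X 1 ^ (r+1) : MvPowerSeries (Fin 2) k) ≠ 0 →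
      e = Finsupp.single 0 r ∨ e = Finsupp.single 1 (r+1) := by
    intro e he
    rw [hg] at he
    by_contra hc
    push_neg at hc
    rw [if_neg hc.1, if_neg hc.2, add_zero] at he
    exact he rfl
  have hg1 : MvPowerSeries.coeff (Finsupp.single 0 r) (a * b) = 1 := by
    rw [h, hg, if_pos rfl, if_neg hsne, add_zero]
  have hg2 : MvPowerSeries.coeff (Finsupp.single 1 (r+1)) (a * b) = 1 := by
    rw [h, hg, if_neg (fun hc => hsne hc.symm), if_pos rfl, zero_add]
  have ha0 : a ≠ 0 := by
    intro h0
    rw [h0, zero_mul, map_zero] at hg1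
    exact one_ne_zero hg1.symm
  have hb0 : b ≠ 0 := by
    intro h0
    rw [h0, mul_zero, map_zero] at hg1
    exact one_ne_zero hg1.symm
  obtain ⟨α, hα, hαmin, hαmin1⟩ := exists_min r a ha0
  obtain ⟨β, hβ, hβmin, hβmin1⟩ := exists_min r b hb0
  have hαpos : 0 < wt r α := by
    rcases Nat.eq_zero_or_pos (wt r α) with h0 | h0
    · exact absurd (by rw [wt_zero r hr α h0] at hα; exact hα) (by simp [ha])
    · exact h0
  have hβpos : 0 < wt r β := by
    rcases Nat.eq_zero_or_pos (wt r β) with h0 | h0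
    · exact absurd (by rw [wt_zero r hr β h0] at hβ; exact hβ) (by simp [hb])
    · exact h0
  -- unique lowest-weight decomposition
  have hclaim1 : MvPowerSeries.coeff (α + β) (a * b)
      = MvPowerSeries.coeff α a * MvPowerSeries.coeff β b := by
    rw [MvPowerSeries.coeff_mul]
    refine (Finset.sum_eq_single (α, β) ?_ ?_).trans rfl
    · intro p hp hne
      by_contra hc
      obtain ⟨h1, h2⟩ := mul_ne_zero_iff.mp hc
      rw [Finset.HasAntidiagonal.mem_antidiagonal] at hp
      have wsum : wt r p.1 + wt r p.2 = wt r α + wt r β := by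
        rw [← wt_add, ← wt_add, hp]
      have hw1 : wt r α ≤ wt r p.1 := hαmin _ h1
      have hw2 : wt r β ≤ wt r p.2 := hβmin _ h2
      have hw1' : wt r p.1 = wt r α := by omega
      have hw2' : wt r p.2 = wt r β := by omega
      have h11 : α 1 ≤ p.1 1 := hαmin1 _ h1 hw1'
      have h21 : β 1 ≤ p.2 1 := hβmin1 _ h2 hw2'
      have hsum1 : p.1 1 + p.2 1 = α 1 + β 1 := by
        have := congrArg (fun f => f 1) hp
        simpa [Finsupp.add_apply] using this
      have he11 : p.1 1 = α 1 := by omega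
      have he10 : p.1 0 = α 0 := by
        have hw1'' := hw1'
        rw [wt_apply, wt_apply, he11] at hw1''
        have := Nat.add_right_cancel hw1''
        exact Nat.eq_of_mul_eq_mul_left (Nat.succ_pos r) this
      have hp1 : p.1 = α := by
        ext i
        fin_cases i
        · show p.1 0 = α 0; exact he10
        · show p.1 1 = α 1; exact he11
      have hp2 : p.2 = β := by
        rw [hp1] at hp
        exact add_left_cancel hp
      exact hne (Prod.ext hp1 hp2)
    · intro hc
      simp [Finset.mem_antidiagonal] at hc
  have hsum : wt r α + wt r β = r * (r+1) := by
    have h3 : MvPowerSeries.coeff (α + β)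
        (MvPowerSeries.X 0 ^ r + MvPowerSeries.X 1 ^ (r+1) : MvPowerSeries (Fin 2) k) ≠ 0 := by
      rw [← h, hclaim1]
      exact mul_ne_zero hα hβ
    rcases hgne _ h3 with hcase | hcase
    · have := congrArg (wt r) hcase
      rw [wt_add] at this
      rw [this]
      simp [wt_apply, Finsupp.single_apply]
      try ring
    · have := congrArg (wt r) hcase
      rw [wt_add] at this
      rw [this]
      simp [wt_apply, Finsupp.single_apply]
      try ring
  -- r divides wt r α
  have hdvd_r : r ∣ wt r α := by
    have hzero : MvPowerSeries.coeff (Finsupp.single 1 (r+1)) (a * b) ≠ 0 := by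
      rw [hg2]; exact one_ne_zero
    rw [MvPowerSeries.coeff_mul] at hzero
    obtain ⟨p, hp, hpne⟩ := Finset.exists_ne_zero_of_sum_ne_zero hzero
    obtain ⟨h1, h2⟩ := mul_ne_zero_iff.mp hpne
    rw [Finset.HasAntidiagonal.mem_antidiagonal] at hp
    have h0 : p.1 0 = 0 ∧ p.2 0 = 0 := by
      have := congrArg (fun f => f 0) hp
      simp [Finsupp.add_apply, Finsupp.single_apply] at this
      omega
    have h1' : p.1 1 + p.2 1 = r + 1 := by
      have := congrArg (fun f => f 1) hp
      simpa [Finsupp.add_apply, Finsupp.single_apply] using this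
    have hwp1 : wt r p.1 = r * p.1 1 := by rw [wt_apply, h0.1]; ring
    have hwp2 : wt r p.2 = r * p.2 1 := by rw [wt_apply, h0.2]; ring
    have hA : wt r α ≤ r * p.1 1 := hwp1 ▸ hαmin _ h1
    have hB : wt r β ≤ r * p.2 1 := hwp2 ▸ hβmin _ h2
    have hAB : r * p.1 1 + r * p.2 1 = r * (r+1) := by
      rw [← Nat.mul_add, h1']
    have : r * p.1 1 = wt r α := by omega
    exact ⟨p.1 1, this.symm⟩
  -- r+1 divides wt r α
  have hdvd_r1 : (r+1) ∣ wt r α := by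
    have hzero : MvPowerSeries.coeff (Finsupp.single 0 r) (a * b) ≠ 0 := by
      rw [hg1]; exact one_ne_zero
    rw [MvPowerSeries.coeff_mul] at hzero
    obtain ⟨p, hp, hpne⟩ := Finset.exists_ne_zero_of_sum_ne_zero hzero
    obtain ⟨h1, h2⟩ := mul_ne_zero_iff.mp hpne
    rw [Finset.HasAntidiagonal.mem_antidiagonal] at hp
    have h0 : p.1 1 = 0 ∧ p.2 1 = 0 := by
      have := congrArg (fun f => f 1) hp
      simp [Finsupp.add_apply, Finsupp.single_apply] at this
      omega
    have h1' : p.1 0 + p.2 0 = r := by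
      have := congrArg (fun f => f 0) hp
      simpa [Finsupp.add_apply, Finsupp.single_apply] using this
    have hwp1 : wt r p.1 = (r+1) * p.1 0 := by rw [wt_apply, h0.1]; ring
    have hwp2 : wt r p.2 = (r+1) * p.2 0 := by rw [wt_apply, h0.2]; ring
    have hA : wt r α ≤ (r+1) * p.1 0 := hwp1 ▸ hαmin _ h1
    have hB : wt r β ≤ (r+1) * p.2 0 := hwp2 ▸ hβmin _ h2
    have hAB : (r+1) * p.1 0 + (r+1) * p.2 0 = (r+1) * r := by
      rw [← Nat.mul_add, h1']
    have hAB' : (r+1) * p.1 0 + (r+1) * p.2 0 = r * (r+1) := by rw [hAB]; ring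
    have : (r+1) * p.1 0 = wt r α := by omega
    exact ⟨p.1 0, this.symm⟩
  have hcop : Nat.Coprime r (r+1) := by simp
  have hdvd : r * (r+1) ∣ wt r α := Nat.Coprime.mul_dvd_of_dvd_of_dvd hcop hdvd_r hdvd_r1
  have := Nat.le_of_dvd hαpos hdvd
  omega

lemma constantCoeff_oneVar (i : Fin 3) (φ : PowerSeries k) :
    MvPowerSeries.constantCoeff (oneVar i φ) = PowerSeries.constantCoeff φ := by
  rw [← MvPowerSeries.coeff_zero_eq_constantCoeff_apply]
  show oneVar i φ 0 = _
  unfold oneVar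
  rw [show ((0 : Fin 3 →₀ ℕ) i) = 0 from rfl, Finsupp.single_zero, if_pos rfl,
    PowerSeries.coeff_zero_eq_constantCoeff_apply]

end Stmt14

theorem irreducible_pow_add_pow_of_algebraicIndependent
    (φ ψ : PowerSeries k) (hφ : 0 < φ.order) (hψ : 0 < ψ.order)
    (hind : AlgebraicIndependent k ![PowerSeries.X, φ, ψ])
    (r : ℕ) (hr : 2 ≤ r) :
    Irreducible ((MvPowerSeries.X 1 - oneVar 0 φ) ^ r
      + (MvPowerSeries.X 2 - oneVar 0 ψ) ^ (r + 1) : MvPowerSeries (Fin 3) k) := by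
  have hφ0 : PowerSeries.constantCoeff φ = 0 := by
    have := PowerSeries.coeff_of_lt_order (φ := φ) 0 (by simpa using hφ)
    simpa using this
  have hψ0 : PowerSeries.constantCoeff ψ = 0 := by
    have := PowerSeries.coeff_of_lt_order (φ := ψ) 0 (by simpa using hψ)
    simpa using this
  have hΘ : Stmt14.Θ ((MvPowerSeries.X 1 - oneVar 0 φ) ^ r
        + (MvPowerSeries.X 2 - oneVar 0 ψ) ^ (r + 1) : MvPowerSeries (Fin 3) k)
      = MvPowerSeries.X 0 ^ r + MvPowerSeries.X 1 ^ (r+1) := by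
    rw [map_add, map_pow, map_pow, map_sub, map_sub, Stmt14.Θ_X1, Stmt14.Θ_X2,
      Stmt14.Θ_oneVar φ hφ0, Stmt14.Θ_oneVar ψ hψ0, sub_zero, sub_zero]
  constructor
  · intro hu
    have h1 := hu.map (MvPowerSeries.constantCoeff)
    have hc : MvPowerSeries.constantCoeff
        ((MvPowerSeries.X 1 - oneVar 0 φ) ^ r
          + (MvPowerSeries.X 2 - oneVar 0 ψ) ^ (r + 1) : MvPowerSeries (Fin 3) k) = 0 := by
      rw [map_add, map_pow, map_pow, map_sub, map_sub, MvPowerSeries.constantCoeff_X,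
        MvPowerSeries.constantCoeff_X, Stmt14.constantCoeff_oneVar, Stmt14.constantCoeff_oneVar,
        hφ0, hψ0, sub_zero, zero_pow (by omega : r ≠ 0), zero_pow (by omega : r + 1 ≠ 0), add_zero]
    rw [hc] at h1
    exact not_isUnit_zero h1
  · intro a b hab
    by_contra hcon
    push_neg at hcon
    have ha0 : MvPowerSeries.coeff 0 a = 0 := by
      rw [MvPowerSeries.coeff_zero_eq_constantCoeff_apply]
      by_contra hne
      exact hcon.1 (MvPowerSeries.isUnit_iff_constantCoeff.mpr (isUnit_iff_ne_zero.mpr hne))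
    have hb0 : MvPowerSeries.coeff 0 b = 0 := by
      rw [MvPowerSeries.coeff_zero_eq_constantCoeff_apply]
      by_contra hne
      exact hcon.2 (MvPowerSeries.isUnit_iff_constantCoeff.mpr (isUnit_iff_ne_zero.mpr hne))
    have ha0' : MvPowerSeries.coeff 0 (Stmt14.Θ a) = 0 := by
      rw [Stmt14.coeff_Θ, Stmt14.ι_zero]; exact ha0
    have hb0' : MvPowerSeries.coeff 0 (Stmt14.Θ b) = 0 := by
      rw [Stmt14.coeff_Θ, Stmt14.ι_zero]; exact hb0
    have hmul : Stmt14.Θ a * Stmt14.Θ b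
        = MvPowerSeries.X 0 ^ r + MvPowerSeries.X 1 ^ (r+1) := by
      rw [← map_mul, ← hab, hΘ]
    exact Stmt14.key r (by omega) (Stmt14.Θ a) (Stmt14.Θ b) ha0' hb0' hmul


end
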